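/- Boundary-data independence of exponentially small differences of Weyl-Titchmarsh matrices (Lemma 4.9a, abstract form): Let m ≥ 1 and let α, α̂ ∈ ℂ^{m×2m} each satisfy ρρ* = I_m and ρJρ* = 0. Fix a > 0 and θ ∈ (0, π), and let M̂_1, M̂_2 be ℂ^{m×m}-valued functions defined on the ray ρ_θ = {r·e^{iθ} : r > 0} such that M̂_j(z) → i·I_m as |z| → ∞ along ρ_θ (j = 1, 2), and such that for every ε > 0 there exist C, R > 0 with ‖M̂_1(z) − M̂_2(z)‖ ≤ C·exp(−2·Im(z)·(a − ε)) for all z ∈ ρ_θ with |z| ≥ R. Then there is R_0 > 0 such that for z ∈ ρ_θ with |z| ≥ R_0 the matrices αα̂* + αJα̂*·M̂_j(z) are invertible (j = 1, 2), and the transformed functions M_j(z) = [−αJα̂* + αα̂*·M̂_j(z)]·[αα̂* + αJα̂*·M̂_j(z)]^{-1} satisfy: for every ε > 0 there exist C', R' > 0 with ‖M_1(z) − M_2(z)‖ ≤ C'·exp(−2·Im(z)·(a − ε)) for all z ∈ ρ_θ with |z| ≥ R'. -/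

import Mathlib

open MeasureTheory Matrix Filter Set
open scoped Matrix.Norms.L2Operator ComplexOrder

noncomputable section

abbrev DMat (m : ℕ) := Matrix (Fin m) (Fin m) ℂ
abbrev DMat2 (m : ℕ) := Matrix (Fin m ⊕ Fin m) (Fin m ⊕ Fin m) ℂ

/-- The matrix J = [[0, -I],[I, 0]]. -/
def Jm (m : ℕ) : DMat2 m := Matrix.fromBlocks 0 (-1) 1 0

/-- Imaginary part of a square complex matrix: (M - M*)/(2i). -/
def matIm {n : Type*} (M : Matrix n n ℂ) : Matrix n n ℂ :=
  (2 * Complex.I)⁻¹ • (M - Mᴴ)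

/-- Dirac-type potential: locally integrable, a.e. self-adjoint. -/
def IsDiracPotential (m : ℕ) (B : ℝ → DMat2 m) : Prop :=
  LocallyIntegrable B volume ∧ ∀ᵐ x : ℝ, (B x).IsHermitian

/-- `F` is locally absolutely continuous on `S` with a.e. derivative `F'`. -/
def AEDerivOn (m : ℕ) (S : Set ℝ) (F F' : ℝ → DMat m) : Prop :=
  LocallyIntegrableOn F' S volume ∧
    ∀ x ∈ S, ∀ y ∈ S, F y = F x + ∫ t in x..y, F' t

/-- `V` is a locally absolutely continuous solution on `S` of the Riccati equation
`V' + z V² + V B₂₂ V + B₁₂ V + V B₂₁ + B₁₁ + z = 0`. -/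
def RiccatiOn (m : ℕ) (B : ℝ → DMat2 m) (z : ℂ) (S : Set ℝ) (V : ℝ → DMat m) : Prop :=
  ∃ V' : ℝ → DMat m, AEDerivOn m S V V' ∧
    ∀ᵐ x : ℝ, x ∈ S →
      V' x + z • (V x * V x) + V x * (B x).toBlocks₂₂ * V x
        + (B x).toBlocks₁₂ * V x + V x * (B x).toBlocks₂₁ + (B x).toBlocks₁₁
        + z • (1 : DMat m) = 0

/-- Open sector with vertex 0, symmetry axis i·ℝ₊, in the upper half-plane. -/
def sector (ε : ℝ) : Set ℂ := {z : ℂ | ε < z.arg ∧ z.arg < Real.pi - ε}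

/-- Column block matrix [I; M]. -/
def colI (m : ℕ) (M : DMat m) : Matrix (Fin m ⊕ Fin m) (Fin m) ℂ := Matrix.fromRows 1 M

/-- The Weyl disk defining matrix E_c(M). -/
def Ec (m : ℕ) (z : ℂ) (x0 c : ℝ) (Ψ : ℝ → DMat2 m) (M : DMat m) : DMat m :=
  Real.sign ((x0 - c) * z.im) •
    ((Ψ c * colI m M)ᴴ * (Complex.I • Jm m) * (Ψ c * colI m M))

/-- Matrix solutions of the Hamiltonian system J Ψ' = (zA + B) Ψ on ℝ. -/
def IsHamMatSol (m : ℕ) {κ : Type} [Fintype κ] [DecidableEq κ] (A B : ℝ → DMat2 m) (z : ℂ)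
    (Ψ : ℝ → Matrix (Fin m ⊕ Fin m) κ ℂ) : Prop :=
  ∃ Ψ' : ℝ → Matrix (Fin m ⊕ Fin m) κ ℂ,
    LocallyIntegrable Ψ' volume ∧
    (∀ a b : ℝ, Ψ b = Ψ a + ∫ t in a..b, Ψ' t) ∧
    (∀ᵐ x : ℝ, Jm m * Ψ' x = (z • A x + B x) * Ψ x)

/-- Vector solutions of the Hamiltonian system. -/
def IsHamVecSol (m : ℕ) (A B : ℝ → DMat2 m) (z : ℂ)
    (ψ : ℝ → (Fin m ⊕ Fin m) → ℂ) : Prop :=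
  ∃ ψ' : ℝ → (Fin m ⊕ Fin m) → ℂ,
    LocallyIntegrable ψ' volume ∧
    (∀ a b : ℝ, ψ b = ψ a + ∫ t in a..b, ψ' t) ∧
    (∀ᵐ x : ℝ, (Jm m) *ᵥ ψ' x = (z • A x + B x) *ᵥ ψ x)

/-- Hypothesis 2.1. -/
structure Hyp21 (m : ℕ) (A B : ℝ → DMat2 m) : Prop where
  locA : LocallyIntegrable A volume
  locB : LocallyIntegrable B volume
  posA : ∀ᵐ x : ℝ, (A x).PosSemidef
  hermB : ∀ᵐ x : ℝ, (B x).IsHermitian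

/-- Atkinson's definiteness Hypothesis 2.2. -/
def Atkinson (m : ℕ) (A B : ℝ → DMat2 m) : Prop :=
  ∀ z : ℂ, ∀ ψ : ℝ → (Fin m ⊕ Fin m) → ℂ, IsHamVecSol m A B z ψ →
    (∃ x, ψ x ≠ 0) → ∀ a b : ℝ, a < b →
      0 < (∫ x in a..b, (star (ψ x)) ⬝ᵥ ((A x) *ᵥ (ψ x))).re

/-- Boundary data conditions (2.8e). -/
def IsBdry (m : ℕ) (α : Matrix (Fin m) (Fin m ⊕ Fin m) ℂ) : Prop :=
  α * αᴴ = 1 ∧ α * Jm m * αᴴ = 0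

/-- Initial value (α*  Jα*) for the normalized fundamental system. -/
def initΨ (m : ℕ) (α : Matrix (Fin m) (Fin m ⊕ Fin m) ℂ) : DMat2 m :=
  Matrix.fromCols αᴴ (Jm m * αᴴ)

/-- The interval from x₀ toward c: [x₀, c) if c > x₀, (c, x₀] if c < x₀. -/
def towardInt (x0 c : ℝ) : Set ℝ := Set.Ico x0 c ∪ Set.Ioc c x0


/-- `U(z,x) = Ψ(z,x)·[I; M]`. -/
def Ufun (m : ℕ) (Ψ : ℝ → DMat2 m) (M : DMat m) (x : ℝ) :
    Matrix (Fin m ⊕ Fin m) (Fin m) ℂ := Ψ x * colI m M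

/-- Top `m×m` component of `U`. -/
def u1fun (m : ℕ) (Ψ : ℝ → DMat2 m) (M : DMat m) (x : ℝ) : DMat m :=
  Matrix.toRows₁ (Ufun m Ψ M x)

/-- Bottom `m×m` component of `U`. -/
def u2fun (m : ℕ) (Ψ : ℝ → DMat2 m) (M : DMat m) (x : ℝ) : DMat m :=
  Matrix.toRows₂ (Ufun m Ψ M x)

/-- Cayley-type transform `ϑ = (u₁ + iσu₂)(u₁ − iσu₂)⁻¹`. -/
def cayley (m : ℕ) (σ : ℝ) (u1 u2 : DMat m) : DMat m :=
  (u1 + ((σ : ℂ) * Complex.I) • u2) * (u1 - ((σ : ℂ) * Complex.I) • u2)⁻¹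

/-- The m×m blocks of a 2m×2m matrix, indexed by `Fin 2`. -/
def blkOf (m : ℕ) (M : DMat2 m) : Fin 2 → Fin 2 → DMat m := fun a b =>
  if a = 0 then (if b = 0 then M.toBlocks₁₁ else M.toBlocks₁₂)
  else (if b = 0 then M.toBlocks₂₁ else M.toBlocks₂₂)

/-- Full-line Weyl-Titchmarsh matrix built from the half-line ones (eq. (2.620)). -/
def weylFull (m : ℕ) (Mm Mp : DMat m) : DMat2 m :=
  Matrix.fromBlocks ((Mm - Mp)⁻¹) ((2:ℂ)⁻¹ • ((Mm - Mp)⁻¹ * (Mm + Mp)))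
    ((2:ℂ)⁻¹ • ((Mm + Mp) * (Mm - Mp)⁻¹)) (Mp * (Mm - Mp)⁻¹ * Mm)

/-- Pair solutions (u₁, u₂) of the Dirac system on a set `S`. -/
def DiracPairSol (m : ℕ) (B : ℝ → DMat2 m) (z : ℂ) (S : Set ℝ)
    (u1 u2 : ℝ → DMat m) : Prop :=
  ∃ w1 w2 : ℝ → DMat m, AEDerivOn m S u1 w1 ∧ AEDerivOn m S u2 w2 ∧
    ∀ᵐ x : ℝ, x ∈ S →
      (-(w2 x) = (z • (1 : DMat m) + (B x).toBlocks₁₁) * u1 x + (B x).toBlocks₁₂ * u2 x ∧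
        w1 x = (B x).toBlocks₂₁ * u1 x + (z • (1 : DMat m) + (B x).toBlocks₂₂) * u2 x)

/-- Square-integrable solutions of the Dirac system on `[c, ∞)`. -/
def NplusSet (m : ℕ) (B : ℝ → DMat2 m) (z : ℂ) (c : ℝ) :
    Set (Set.Ici c → (Fin m ⊕ Fin m) → ℂ) :=
  {φ | ∃ w : ℝ → (Fin m ⊕ Fin m) → ℂ,
    LocallyIntegrableOn w (Set.Ici c) volume ∧
    (∀ x y : Set.Ici c, φ y = φ x + ∫ t in (x : ℝ)..(y : ℝ), w t) ∧
    (∀ᵐ t : ℝ, ∀ ht : t ∈ Set.Ici c,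
      (Jm m) *ᵥ w t = (z • (1 : DMat2 m) + B t) *ᵥ φ ⟨t, ht⟩) ∧
    IntegrableOn (fun t : ℝ =>
      if ht : t ∈ Set.Ici c then ∑ i, ‖φ ⟨t, ht⟩ i‖ ^ 2 else 0) (Set.Ici c) volume}

/-- Square-integrable solutions of the Dirac system on `(−∞, c]`. -/
def NminusSet (m : ℕ) (B : ℝ → DMat2 m) (z : ℂ) (c : ℝ) :
    Set (Set.Iic c → (Fin m ⊕ Fin m) → ℂ) :=
  {φ | ∃ w : ℝ → (Fin m ⊕ Fin m) → ℂ,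
    LocallyIntegrableOn w (Set.Iic c) volume ∧
    (∀ x y : Set.Iic c, φ y = φ x + ∫ t in (x : ℝ)..(y : ℝ), w t) ∧
    (∀ᵐ t : ℝ, ∀ ht : t ∈ Set.Iic c,
      (Jm m) *ᵥ w t = (z • (1 : DMat2 m) + B t) *ᵥ φ ⟨t, ht⟩) ∧
    IntegrableOn (fun t : ℝ =>
      if ht : t ∈ Set.Iic c then ∑ i, ‖φ ⟨t, ht⟩ i‖ ^ 2 else 0) (Set.Iic c) volume}


lemma aux_jsq (m : ℕ) : Jm m * Jm m = -1 := by
  simp [Jm, Matrix.fromBlocks_multiply, Matrix.fromBlocks_neg, ← Matrix.fromBlocks_one]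

lemma aux_jconj (m : ℕ) : (Jm m)ᴴ = -(Jm m) := by
  simp [Jm, Matrix.fromBlocks_conjTranspose, Matrix.fromBlocks_neg]

lemma aux_star_id (m : ℕ) (α : Matrix (Fin m) (Fin m ⊕ Fin m) ℂ) (hα : IsBdry m α) :
    αᴴ * α - Jm m * (αᴴ * α) * Jm m = 1 := by
  have ha2' : α * (Jm m * αᴴ) = 0 := by rw [← Matrix.mul_assoc]; exact hα.2
  have hQ : (Matrix.fromRows α (α * Jm m)) * (Matrix.fromRows α (α * Jm m))ᴴ = 1 := by
    rw [Matrix.conjTranspose_fromRows_eq_fromCols_conjTranspose,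
      Matrix.fromRows_mul_fromCols]
    have h2 : α * (α * Jm m)ᴴ = 0 := by
      rw [Matrix.conjTranspose_mul, aux_jconj]
      simp [neg_mul, mul_neg, ha2']
    have h4 : α * Jm m * (α * Jm m)ᴴ = 1 := by
      rw [Matrix.conjTranspose_mul, aux_jconj]
      have h5 : α * Jm m * (Jm m * αᴴ) = α * (Jm m * Jm m) * αᴴ := by
        simp only [Matrix.mul_assoc]
      simp [neg_mul, mul_neg, h5, aux_jsq, hα.1]
    rw [hα.1, h2, hα.2, h4, Matrix.fromBlocks_one]
  have hQ' := mul_eq_one_comm.mp hQ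
  rw [Matrix.conjTranspose_fromRows_eq_fromCols_conjTranspose,
    Matrix.fromCols_mul_fromRows] at hQ'
  rw [Matrix.conjTranspose_mul, aux_jconj] at hQ'
  calc αᴴ * α - Jm m * (αᴴ * α) * Jm m
      = αᴴ * α + -Jm m * αᴴ * (α * Jm m) := by
        simp only [sub_eq_add_neg, neg_mul, Matrix.mul_assoc]
    _ = 1 := hQ'

lemma left_inv (m : ℕ) (α αh : Matrix (Fin m) (Fin m ⊕ Fin m) ℂ)
    (hα : IsBdry m α) (hαh : IsBdry m αh) :
    (αh * αᴴ + Complex.I • (αh * Jm m * αᴴ)) * (α * αhᴴ + Complex.I • (α * Jm m * αhᴴ)) = 1 := by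
  set J := Jm m with hJdef
  set S := αᴴ * α with hSdef
  have hS : S - J * S * J = 1 := aux_star_id m α hα
  have hJJ : J * J = -1 := aux_jsq m
  have hSJ : S * J + J * S = J := by
    have hS' : S = 1 + J * S * J := sub_eq_iff_eq_add.mp hS
    calc S * J + J * S = (1 + J * S * J) * J + J * S := by rw [← hS']
      _ = J + J * S * (J * J) + J * S := by noncomm_ring
      _ = J := by rw [hJJ]; noncomm_ring
  have e1 : αh * (αᴴ * (α * αhᴴ)) - αh * (J * (αᴴ * (α * (J * αhᴴ))))
      = αh * ((S - J * S * J) * αhᴴ) := by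
    rw [hSdef, Matrix.sub_mul, Matrix.mul_sub]
    simp only [Matrix.mul_assoc]
  have e2 : αh * (αᴴ * (α * (J * αhᴴ))) + αh * (J * (αᴴ * (α * αhᴴ)))
      = αh * ((S * J + J * S) * αhᴴ) := by
    rw [hSdef, Matrix.add_mul, Matrix.mul_add]
    simp only [Matrix.mul_assoc]
  have expand : (αh * αᴴ + Complex.I • (αh * J * αᴴ)) * (α * αhᴴ + Complex.I • (α * J * αhᴴ))
      = (αh * (αᴴ * (α * αhᴴ)) - αh * (J * (αᴴ * (α * (J * αhᴴ)))))
        + Complex.I • (αh * (αᴴ * (α * (J * αhᴴ))) + αh * (J * (αᴴ * (α * αhᴴ)))) := by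
    simp only [add_mul, mul_add, Matrix.smul_mul, Matrix.mul_smul, smul_smul,
      Complex.I_mul_I, neg_smul, one_smul, smul_add, Matrix.mul_assoc]
    abel
  rw [expand, e1, e2, hS, hSJ]
  have h0 : αh * (J * αhᴴ) = 0 := by rw [← Matrix.mul_assoc]; exact hαh.2
  simp only [Matrix.one_mul, h0, smul_zero, add_zero, hαh.1]


lemma tendsto_inv_matrix {m : ℕ} {f : ℝ → DMat m} {W : DMat m} (hW : W.det ≠ 0)
    (h : Tendsto f atTop (nhds W)) : Tendsto (fun r => (f r)⁻¹) atTop (nhds W⁻¹) := by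
  have hdet : Tendsto (fun r => (f r).det) atTop (nhds W.det) :=
    ((continuous_id.matrix_det).tendsto W).comp h
  have hadj : Tendsto (fun r => (f r).adjugate) atTop (nhds W.adjugate) :=
    ((continuous_id.matrix_adjugate).tendsto W).comp h
  have hmain : Tendsto (fun r => ((f r).det)⁻¹ • (f r).adjugate) atTop
      (nhds (W.det⁻¹ • W.adjugate)) := (hdet.inv₀ hW).smul hadj
  simpa only [Matrix.inv_def, Ring.inverse_eq_inv'] using hmain

lemma diff_formula {m : ℕ} (A Bm X1 X2 : DMat m)
    (hu1 : IsUnit (A + Bm * X1).det) (hu2 : IsUnit (A + Bm * X2).det) :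
    (-Bm + A * X1) * (A + Bm * X1)⁻¹ - (-Bm + A * X2) * (A + Bm * X2)⁻¹
      = A * (X1 - X2) * (A + Bm * X1)⁻¹
        - ((-Bm + A * X2) * (A + Bm * X2)⁻¹) * (Bm * (X1 - X2)) * (A + Bm * X1)⁻¹ := by
  set D1 := A + Bm * X1 with hD1
  set D2 := A + Bm * X2 with hD2
  set G1 := D1⁻¹ with hG1
  set G2 := D2⁻¹ with hG2
  have h1 : D1 * G1 = 1 := Matrix.mul_nonsing_inv _ hu1
  have h2 : G2 * D2 = 1 := Matrix.nonsing_inv_mul _ hu2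
  have hGdiff : G1 - G2 = G2 * (D2 - D1) * G1 := by
    have e : G2 * (D2 - D1) * G1 = G2 * D2 * G1 - G2 * (D1 * G1) := by noncomm_ring
    rw [e, h2, Matrix.one_mul, h1, Matrix.mul_one]
  have hD21 : D2 - D1 = -(Bm * (X1 - X2)) := by rw [hD1, hD2]; noncomm_ring
  calc (-Bm + A * X1) * G1 - (-Bm + A * X2) * G2
      = (A * X1 - A * X2) * G1 + (-Bm + A * X2) * (G1 - G2) := by noncomm_ring
    _ = (A * X1 - A * X2) * G1 + (-Bm + A * X2) * (G2 * -(Bm * (X1 - X2)) * G1) := by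
        rw [hGdiff, hD21]
    _ = A * (X1 - X2) * G1 - ((-Bm + A * X2) * G2) * (Bm * (X1 - X2)) * G1 := by noncomm_ring


theorem statement17 (m : ℕ) (hm : 1 ≤ m)
    (α αh : Matrix (Fin m) (Fin m ⊕ Fin m) ℂ) (hα : IsBdry m α) (hαh : IsBdry m αh)
    (a θ : ℝ) (ha : 0 < a) (hθ0 : 0 < θ) (hθπ : θ < Real.pi)
    (M1 M2 : ℂ → DMat m)
    (hlim1 : Filter.Tendsto (fun r : ℝ => M1 ((r : ℂ) * Complex.exp (Complex.I * (θ : ℂ))))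
      Filter.atTop (nhds (Complex.I • (1 : DMat m))))
    (hlim2 : Filter.Tendsto (fun r : ℝ => M2 ((r : ℂ) * Complex.exp (Complex.I * (θ : ℂ))))
      Filter.atTop (nhds (Complex.I • (1 : DMat m))))
    (hdec : ∀ ε > 0, ∃ C > 0, ∃ R > 0, ∀ r : ℝ, R ≤ r →
      ‖M1 ((r : ℂ) * Complex.exp (Complex.I * (θ : ℂ)))
          - M2 ((r : ℂ) * Complex.exp (Complex.I * (θ : ℂ)))‖
        ≤ C * Real.exp (-2 * (r * Real.sin θ) * (a - ε))) :
    ∃ R0 > 0, (∀ r : ℝ, R0 ≤ r →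
        IsUnit (α * αhᴴ + α * Jm m * αhᴴ * M1 ((r : ℂ) * Complex.exp (Complex.I * (θ : ℂ)))) ∧
        IsUnit (α * αhᴴ + α * Jm m * αhᴴ * M2 ((r : ℂ) * Complex.exp (Complex.I * (θ : ℂ))))) ∧
      ∀ ε > 0, ∃ C' > 0, ∃ R' > 0, ∀ r : ℝ, R' ≤ r →
        ‖(-(α * Jm m * αhᴴ) + α * αhᴴ * M1 ((r : ℂ) * Complex.exp (Complex.I * (θ : ℂ)))) *
            (α * αhᴴ + α * Jm m * αhᴴ * M1 ((r : ℂ) * Complex.exp (Complex.I * (θ : ℂ))))⁻¹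
          - (-(α * Jm m * αhᴴ) + α * αhᴴ * M2 ((r : ℂ) * Complex.exp (Complex.I * (θ : ℂ)))) *
            (α * αhᴴ + α * Jm m * αhᴴ * M2 ((r : ℂ) * Complex.exp (Complex.I * (θ : ℂ))))⁻¹‖
          ≤ C' * Real.exp (-2 * (r * Real.sin θ) * (a - ε)) := by
  classical
  set A := α * αhᴴ with hA
  set Bm := α * Jm m * αhᴴ with hB
  set W : DMat m := A + Complex.I • Bm with hWdef
  set L : DMat m := αh * αᴴ + Complex.I • (αh * Jm m * αᴴ) with hLdef
  have hLW : L * W = 1 := left_inv m α αh hα hαh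
  have hWunit : IsUnit W := isUnit_iff_exists.mpr ⟨L, mul_eq_one_comm.mp hLW, hLW⟩
  have hWdet : IsUnit W.det := (Matrix.isUnit_iff_isUnit_det W).mp hWunit
  have hWdetne : W.det ≠ 0 := hWdet.ne_zero
  have hWlim : A + Bm * (Complex.I • (1 : DMat m)) = W := by
    rw [hWdef, Matrix.mul_smul, Matrix.mul_one]
  -- limits of the denominators
  have hD1 : Tendsto (fun r : ℝ =>
      A + Bm * M1 ((r : ℂ) * Complex.exp (Complex.I * (θ : ℂ)))) atTop (nhds W) := by
    rw [← hWlim]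
    exact tendsto_const_nhds.add (tendsto_const_nhds.mul hlim1)
  have hD2 : Tendsto (fun r : ℝ =>
      A + Bm * M2 ((r : ℂ) * Complex.exp (Complex.I * (θ : ℂ)))) atTop (nhds W) := by
    rw [← hWlim]
    exact tendsto_const_nhds.add (tendsto_const_nhds.mul hlim2)
  have hG1 : Tendsto (fun r : ℝ =>
      (A + Bm * M1 ((r : ℂ) * Complex.exp (Complex.I * (θ : ℂ))))⁻¹) atTop (nhds W⁻¹) :=
    tendsto_inv_matrix hWdetne hD1
  have hG2 : Tendsto (fun r : ℝ =>
      (A + Bm * M2 ((r : ℂ) * Complex.exp (Complex.I * (θ : ℂ))))⁻¹) atTop (nhds W⁻¹) :=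
    tendsto_inv_matrix hWdetne hD2
  set Y : DMat m := (-Bm + A * (Complex.I • (1 : DMat m))) * W⁻¹ with hYdef
  have hN2 : Tendsto (fun r : ℝ =>
      (-Bm + A * M2 ((r : ℂ) * Complex.exp (Complex.I * (θ : ℂ)))) *
        (A + Bm * M2 ((r : ℂ) * Complex.exp (Complex.I * (θ : ℂ))))⁻¹) atTop (nhds Y) :=
    (tendsto_const_nhds.add (tendsto_const_nhds.mul hlim2)).mul hG2
  -- eventual facts
  have hdet1 : Tendsto (fun r : ℝ =>
      (A + Bm * M1 ((r : ℂ) * Complex.exp (Complex.I * (θ : ℂ)))).det) atTop (nhds W.det) :=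
    ((continuous_id.matrix_det).tendsto W).comp hD1
  have hdet2 : Tendsto (fun r : ℝ =>
      (A + Bm * M2 ((r : ℂ) * Complex.exp (Complex.I * (θ : ℂ)))).det) atTop (nhds W.det) :=
    ((continuous_id.matrix_det).tendsto W).comp hD2
  have hEv1 : ∀ᶠ r : ℝ in atTop,
      IsUnit (A + Bm * M1 ((r : ℂ) * Complex.exp (Complex.I * (θ : ℂ)))).det := by
    filter_upwards [hdet1 (compl_singleton_mem_nhds hWdetne)] with r hr
    exact isUnit_iff_ne_zero.mpr hr
  have hEv2 : ∀ᶠ r : ℝ in atTop,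
      IsUnit (A + Bm * M2 ((r : ℂ) * Complex.exp (Complex.I * (θ : ℂ)))).det := by
    filter_upwards [hdet2 (compl_singleton_mem_nhds hWdetne)] with r hr
    exact isUnit_iff_ne_zero.mpr hr
  have hEvG : ∀ᶠ r : ℝ in atTop,
      ‖(A + Bm * M1 ((r : ℂ) * Complex.exp (Complex.I * (θ : ℂ))))⁻¹‖ ≤ ‖W⁻¹‖ + 1 := by
    filter_upwards [hG1.norm (Iio_mem_nhds (by linarith [norm_nonneg (W⁻¹)] : ‖W⁻¹‖ < ‖W⁻¹‖ + 1))]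
      with r hr
    exact le_of_lt hr
  have hEvN : ∀ᶠ r : ℝ in atTop,
      ‖(-Bm + A * M2 ((r : ℂ) * Complex.exp (Complex.I * (θ : ℂ)))) *
        (A + Bm * M2 ((r : ℂ) * Complex.exp (Complex.I * (θ : ℂ))))⁻¹‖ ≤ ‖Y‖ + 1 := by
    filter_upwards [hN2.norm (Iio_mem_nhds (by linarith [norm_nonneg Y] : ‖Y‖ < ‖Y‖ + 1))]
      with r hr
    exact le_of_lt hr
  obtain ⟨Rb, hRb⟩ := eventually_atTop.mp (((hEv1.and hEv2).and hEvG).and hEvN)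
  refine ⟨max Rb 1, lt_of_lt_of_le one_pos (le_max_right _ _), ?_, ?_⟩
  · intro r hr
    obtain ⟨⟨⟨hu1, hu2⟩, -⟩, -⟩ := hRb r ((le_max_left _ _).trans hr)
    exact ⟨(Matrix.isUnit_iff_isUnit_det _).mpr hu1, (Matrix.isUnit_iff_isUnit_det _).mpr hu2⟩
  · intro ε hε
    obtain ⟨C, hC, R, hR, hbound⟩ := hdec ε hε
    refine ⟨(‖A‖ + (‖Y‖ + 1) * ‖Bm‖) * (‖W⁻¹‖ + 1) * C + 1, by positivity,
      max R (max Rb 1), lt_of_lt_of_le one_pos ((le_max_right Rb 1).trans (le_max_right R _)), ?_⟩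
    intro r hr
    have hrR : R ≤ r := (le_max_left _ _).trans hr
    have hrRb : Rb ≤ r := ((le_max_left Rb 1).trans (le_max_right R _)).trans hr
    obtain ⟨⟨⟨hu1, hu2⟩, hg1⟩, hn2⟩ := hRb r hrRb
    have hΔ := hbound r hrR
    set E := Real.exp (-2 * (r * Real.sin θ) * (a - ε)) with hE
    have hEpos : 0 < E := Real.exp_pos _
    set X1 := M1 ((r : ℂ) * Complex.exp (Complex.I * (θ : ℂ))) with hX1
    set X2 := M2 ((r : ℂ) * Complex.exp (Complex.I * (θ : ℂ))) with hX2
    rw [diff_formula A Bm X1 X2 hu1 hu2]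
    have t1 : ‖A * (X1 - X2) * (A + Bm * X1)⁻¹‖ ≤ ‖A‖ * ‖X1 - X2‖ * ‖(A + Bm * X1)⁻¹‖ :=
      le_trans (norm_mul_le _ _)
        (mul_le_mul_of_nonneg_right (norm_mul_le _ _) (norm_nonneg _))
    have t2 : ‖((-Bm + A * X2) * (A + Bm * X2)⁻¹) * (Bm * (X1 - X2)) * (A + Bm * X1)⁻¹‖
        ≤ ‖(-Bm + A * X2) * (A + Bm * X2)⁻¹‖ * (‖Bm‖ * ‖X1 - X2‖) * ‖(A + Bm * X1)⁻¹‖ := by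
      refine le_trans (norm_mul_le _ _) (mul_le_mul_of_nonneg_right ?_ (norm_nonneg _))
      exact le_trans (norm_mul_le _ _)
        (mul_le_mul_of_nonneg_left (norm_mul_le _ _) (norm_nonneg _))
    calc ‖A * (X1 - X2) * (A + Bm * X1)⁻¹
          - ((-Bm + A * X2) * (A + Bm * X2)⁻¹) * (Bm * (X1 - X2)) * (A + Bm * X1)⁻¹‖
        ≤ ‖A * (X1 - X2) * (A + Bm * X1)⁻¹‖
          + ‖((-Bm + A * X2) * (A + Bm * X2)⁻¹) * (Bm * (X1 - X2)) * (A + Bm * X1)⁻¹‖ :=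
          norm_sub_le _ _
      _ ≤ ‖A‖ * ‖X1 - X2‖ * ‖(A + Bm * X1)⁻¹‖
          + ‖(-Bm + A * X2) * (A + Bm * X2)⁻¹‖ * (‖Bm‖ * ‖X1 - X2‖) * ‖(A + Bm * X1)⁻¹‖ :=
          add_le_add t1 t2
      _ ≤ ‖A‖ * (C * E) * (‖W⁻¹‖ + 1)
          + (‖Y‖ + 1) * (‖Bm‖ * (C * E)) * (‖W⁻¹‖ + 1) := by
          gcongr <;> first
            | exact hΔ
            | exact hg1
            | exact hn2
      _ = (‖A‖ + (‖Y‖ + 1) * ‖Bm‖) * (‖W⁻¹‖ + 1) * C * E := by ring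
      _ ≤ ((‖A‖ + (‖Y‖ + 1) * ‖Bm‖) * (‖W⁻¹‖ + 1) * C + 1) * E := by nlinarith [hEpos.le]
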